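/- For every n ≥ 4, the commutator subgroup VB_n' equals the subgroup of VB_n generated by the 2n−3 elements c_3, c_4, …, c_{n−1}, f_0, f_1, f_2, g_{0,3}, g_{0,4}, …, g_{0,n−1}; in particular, VB_n' is finitely generated and can be generated by 2n−3 elements, and VB_4' is generated by the 5 elements c_3, f_0, f_1, f_2, g_{0,3}. -/

import Mathlib

/-!
Common setup: the virtual braid group `VB n` and the welded braid group `WB n`
as presented groups, together with the distinguished elements of their
commutator subgroups used in the paper
"Commutator subgroups of virtual and welded braid groups".

Generators: for `i : Fin (n-1)`, `Sum.inl i` represents σ_{i+1} and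
`Sum.inr i` represents ρ_{i+1}.
-/

/-- The generating set of `VB n` (and `WB n`). -/
abbrev VBGen (n : ℕ) := (Fin (n - 1)) ⊕ (Fin (n - 1))

/-- The free group letter σ_i, for `1 ≤ i ≤ n-1` (junk value `1` otherwise). -/
def fσ (n i : ℕ) : FreeGroup (VBGen n) :=
  if h : 1 ≤ i ∧ i - 1 < n - 1 then FreeGroup.of (Sum.inl ⟨i - 1, h.2⟩) else 1

/-- The free group letter ρ_i, for `1 ≤ i ≤ n-1` (junk value `1` otherwise). -/
def fρ (n i : ℕ) : FreeGroup (VBGen n) :=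
  if h : 1 ≤ i ∧ i - 1 < n - 1 then FreeGroup.of (Sum.inr ⟨i - 1, h.2⟩) else 1

/-- The defining relators of the virtual braid group `VB n`. -/
def vbRels (n : ℕ) : Set (FreeGroup (VBGen n)) :=
  {r | ∃ i j, 1 ≤ i ∧ i + 2 ≤ j ∧ j ≤ n - 1 ∧
      (r = fσ n i * fσ n j * (fσ n i)⁻¹ * (fσ n j)⁻¹ ∨
       r = fρ n i * fρ n j * (fρ n i)⁻¹ * (fρ n j)⁻¹ ∨
       r = fσ n i * fρ n j * (fσ n i)⁻¹ * (fρ n j)⁻¹ ∨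
       r = fσ n j * fρ n i * (fσ n j)⁻¹ * (fρ n i)⁻¹)} ∪
  {r | ∃ i, 1 ≤ i ∧ i + 1 ≤ n - 1 ∧
      (r = fσ n i * fσ n (i+1) * fσ n i * (fσ n (i+1))⁻¹ * (fσ n i)⁻¹ * (fσ n (i+1))⁻¹ ∨
       r = fρ n i * fρ n (i+1) * fρ n i * (fρ n (i+1))⁻¹ * (fρ n i)⁻¹ * (fρ n (i+1))⁻¹ ∨
       r = fρ n i * fρ n (i+1) * fσ n i * (fρ n (i+1))⁻¹ * (fρ n i)⁻¹ * (fσ n (i+1))⁻¹)} ∪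
  {r | ∃ i, 1 ≤ i ∧ i ≤ n - 1 ∧ r = fρ n i * fρ n i}

/-- The virtual braid group on `n` strands. -/
abbrev VB (n : ℕ) := PresentedGroup (vbRels n)

/-- The generator σ_i of `VB n`. -/
def vσ (n i : ℕ) : VB n := PresentedGroup.mk (vbRels n) (fσ n i)

/-- The generator ρ_i of `VB n`. -/
def vρ (n i : ℕ) : VB n := PresentedGroup.mk (vbRels n) (fρ n i)

/-- a_m = σ_1^m (ρ_1 σ_1 ρ_1 σ_1⁻¹) σ_1^{-m}. -/
def va (n : ℕ) (m : ℤ) : VB n :=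
  (vσ n 1) ^ m * (vρ n 1 * vσ n 1 * vρ n 1 * (vσ n 1)⁻¹) * (vσ n 1) ^ (-m)

/-- b_{m,ε} = σ_1^m (ρ_1^ε σ_2 ρ_1^ε σ_1⁻¹) σ_1^{-m}. -/
def vb (n : ℕ) (m : ℤ) (ε : ℕ) : VB n :=
  (vσ n 1) ^ m * ((vρ n 1) ^ ε * vσ n 2 * (vρ n 1) ^ ε * (vσ n 1)⁻¹) * (vσ n 1) ^ (-m)

/-- c_l = σ_l σ_1⁻¹. -/
def vc (n l : ℕ) : VB n := vσ n l * (vσ n 1)⁻¹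

/-- f_{m,ε} = σ_1^m (ρ_1^ε ρ_2 ρ_1^{ε+1}) σ_1^{-m}; `f_m` is `vf n m 0`. -/
def vf (n : ℕ) (m : ℤ) (ε : ℕ) : VB n :=
  (vσ n 1) ^ m * ((vρ n 1) ^ ε * vρ n 2 * (vρ n 1) ^ (ε + 1)) * (vσ n 1) ^ (-m)

/-- g_{m,l} = σ_1^m (ρ_l ρ_1) σ_1^{-m}. -/
def vg (n : ℕ) (m : ℤ) (l : ℕ) : VB n :=
  (vσ n 1) ^ m * (vρ n l * vρ n 1) * (vσ n 1) ^ (-m)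

/-- The additional relators ρ_i σ_{i+1} σ_i (ρ_{i+1})⁻¹ σ_i⁻¹ σ_{i+1}⁻¹ of the
welded braid group. -/
def wbExtraRels (n : ℕ) : Set (FreeGroup (VBGen n)) :=
  {r | ∃ i, 1 ≤ i ∧ i + 1 ≤ n - 1 ∧
      r = fρ n i * fσ n (i+1) * fσ n i * (fρ n (i+1))⁻¹ * (fσ n i)⁻¹ * (fσ n (i+1))⁻¹}

/-- The defining relators of the welded braid group `WB n`. -/
def wbRels (n : ℕ) : Set (FreeGroup (VBGen n)) := vbRels n ∪ wbExtraRels n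

/-- The welded braid group on `n` strands. -/
abbrev WB (n : ℕ) := PresentedGroup (wbRels n)

/-- The generator σ_i of `WB n`. -/
def wσ (n i : ℕ) : WB n := PresentedGroup.mk (wbRels n) (fσ n i)

/-- The generator ρ_i of `WB n`. -/
def wρ (n i : ℕ) : WB n := PresentedGroup.mk (wbRels n) (fρ n i)

/-- a_m in `WB n`. -/
def wa (n : ℕ) (m : ℤ) : WB n :=
  (wσ n 1) ^ m * (wρ n 1 * wσ n 1 * wρ n 1 * (wσ n 1)⁻¹) * (wσ n 1) ^ (-m)

/-- f_{m,ε} in `WB n`; `f_m` is `wf n m 0`. -/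
def wf (n : ℕ) (m : ℤ) (ε : ℕ) : WB n :=
  (wσ n 1) ^ m * ((wρ n 1) ^ ε * wρ n 2 * (wρ n 1) ^ (ε + 1)) * (wσ n 1) ^ (-m)

/-- c_l in `WB n`. -/
def wc (n l : ℕ) : WB n := wσ n l * (wσ n 1)⁻¹

/-- g_{m,l} in `WB n`. -/
def wg (n : ℕ) (m : ℤ) (l : ℕ) : WB n :=
  (wσ n 1) ^ m * (wρ n l * wρ n 1) * (wσ n 1) ^ (-m)

section VBAux

open PresentedGroup

variable {n : ℕ}

private lemma mk_rel {r : FreeGroup (VBGen n)} (hr : r ∈ vbRels n) :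
    PresentedGroup.mk (vbRels n) r = 1 :=
  (QuotientGroup.eq_one_iff r).mpr (Subgroup.subset_normalClosure hr)

private lemma rel_ss {i j : ℕ} (h1 : 1 ≤ i) (h2 : i + 2 ≤ j) (h3 : j ≤ n - 1) :
    vσ n i * vσ n j = vσ n j * vσ n i := by
  have h : vσ n i * vσ n j * (vσ n i)⁻¹ * (vσ n j)⁻¹ = 1 := by
    simpa [vσ, map_mul, map_inv] using
      mk_rel (Set.mem_union_left _ (Set.mem_union_left _ ⟨i, j, h1, h2, h3, Or.inl rfl⟩))
  rw [← mul_inv_eq_one, ← h]; group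

private lemma rel_rr {i j : ℕ} (h1 : 1 ≤ i) (h2 : i + 2 ≤ j) (h3 : j ≤ n - 1) :
    vρ n i * vρ n j = vρ n j * vρ n i := by
  have h : vρ n i * vρ n j * (vρ n i)⁻¹ * (vρ n j)⁻¹ = 1 := by
    simpa [vρ, map_mul, map_inv] using
      mk_rel (Set.mem_union_left _ (Set.mem_union_left _ ⟨i, j, h1, h2, h3, Or.inr (Or.inl rfl)⟩))
  rw [← mul_inv_eq_one, ← h]; group

private lemma rel_sr {i j : ℕ} (h1 : 1 ≤ i) (h2 : i + 2 ≤ j) (h3 : j ≤ n - 1) :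
    vσ n i * vρ n j = vρ n j * vσ n i := by
  have h : vσ n i * vρ n j * (vσ n i)⁻¹ * (vρ n j)⁻¹ = 1 := by
    simpa [vσ, vρ, map_mul, map_inv] using
      mk_rel (Set.mem_union_left _ (Set.mem_union_left _
        ⟨i, j, h1, h2, h3, Or.inr (Or.inr (Or.inl rfl))⟩))
  rw [← mul_inv_eq_one, ← h]; group

private lemma rel_sr' {i j : ℕ} (h1 : 1 ≤ i) (h2 : i + 2 ≤ j) (h3 : j ≤ n - 1) :
    vσ n j * vρ n i = vρ n i * vσ n j := by
  have h : vσ n j * vρ n i * (vσ n j)⁻¹ * (vρ n i)⁻¹ = 1 := by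
    simpa [vσ, vρ, map_mul, map_inv] using
      mk_rel (Set.mem_union_left _ (Set.mem_union_left _
        ⟨i, j, h1, h2, h3, Or.inr (Or.inr (Or.inr rfl))⟩))
  rw [← mul_inv_eq_one, ← h]; group

private lemma rel_braid_s {i : ℕ} (h1 : 1 ≤ i) (h2 : i + 1 ≤ n - 1) :
    vσ n i * vσ n (i+1) * vσ n i = vσ n (i+1) * vσ n i * vσ n (i+1) := by
  have h : vσ n i * vσ n (i+1) * vσ n i * (vσ n (i+1))⁻¹ * (vσ n i)⁻¹ * (vσ n (i+1))⁻¹ = 1 := by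
    simpa [vσ, map_mul, map_inv] using
      mk_rel (Set.mem_union_left _ (Set.mem_union_right _ ⟨i, h1, h2, Or.inl rfl⟩))
  rw [← mul_inv_eq_one, ← h]; group

private lemma rel_braid_r {i : ℕ} (h1 : 1 ≤ i) (h2 : i + 1 ≤ n - 1) :
    vρ n i * vρ n (i+1) * vρ n i = vρ n (i+1) * vρ n i * vρ n (i+1) := by
  have h : vρ n i * vρ n (i+1) * vρ n i * (vρ n (i+1))⁻¹ * (vρ n i)⁻¹ * (vρ n (i+1))⁻¹ = 1 := by
    simpa [vρ, map_mul, map_inv] using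
      mk_rel (Set.mem_union_left _ (Set.mem_union_right _ ⟨i, h1, h2, Or.inr (Or.inl rfl)⟩))
  rw [← mul_inv_eq_one, ← h]; group

private lemma rel_mixed {i : ℕ} (h1 : 1 ≤ i) (h2 : i + 1 ≤ n - 1) :
    vρ n i * vρ n (i+1) * vσ n i = vσ n (i+1) * vρ n i * vρ n (i+1) := by
  have h : vρ n i * vρ n (i+1) * vσ n i * (vρ n (i+1))⁻¹ * (vρ n i)⁻¹ * (vσ n (i+1))⁻¹ = 1 := by
    simpa [vσ, vρ, map_mul, map_inv] using
      mk_rel (Set.mem_union_left _ (Set.mem_union_right _ ⟨i, h1, h2, Or.inr (Or.inr rfl)⟩))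
  rw [← mul_inv_eq_one, ← h]; group

private lemma rel_rho_sq {i : ℕ} (h1 : 1 ≤ i) (h2 : i ≤ n - 1) :
    vρ n i * vρ n i = 1 := by
  simpa [vρ, map_mul] using mk_rel (Set.mem_union_right _ ⟨i, h1, h2, rfl⟩)

private lemma vρ_inv {i : ℕ} (h1 : 1 ≤ i) (h2 : i ≤ n - 1) :
    (vρ n i)⁻¹ = vρ n i :=
  inv_eq_of_mul_eq_one_right (rel_rho_sq h1 h2)

end VBAux

section VBLetters

variable {n : ℕ}

private lemma P2 (hn : 4 ≤ n) : vρ n 1 * vρ n 1 = 1 := rel_rho_sq le_rfl (by omega)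
private lemma Q2 (hn : 4 ≤ n) : vρ n 2 * vρ n 2 = 1 := rel_rho_sq (by omega) (by omega)
private lemma W2 (hn : 4 ≤ n) : vρ n 3 * vρ n 3 = 1 := rel_rho_sq (by omega) (by omega)
private lemma pinv (hn : 4 ≤ n) : (vρ n 1)⁻¹ = vρ n 1 := inv_eq_of_mul_eq_one_right (P2 hn)
private lemma qinv (hn : 4 ≤ n) : (vρ n 2)⁻¹ = vρ n 2 := inv_eq_of_mul_eq_one_right (Q2 hn)
private lemma winv (hn : 4 ≤ n) : (vρ n 3)⁻¹ = vρ n 3 := inv_eq_of_mul_eq_one_right (W2 hn)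

private lemma R1 (hn : 4 ≤ n) : vσ n 1 * vσ n 2 * vσ n 1 = vσ n 2 * vσ n 1 * vσ n 2 := by
  have h := rel_braid_s (n := n) (i := 1) le_rfl (by omega); norm_num at h; exact h
private lemma R2 (hn : 4 ≤ n) : vρ n 1 * vρ n 2 * vρ n 1 = vρ n 2 * vρ n 1 * vρ n 2 := by
  have h := rel_braid_r (n := n) (i := 1) le_rfl (by omega); norm_num at h; exact h
private lemma R2w (hn : 4 ≤ n) : vρ n 2 * vρ n 3 * vρ n 2 = vρ n 3 * vρ n 2 * vρ n 3 := by
  have h := rel_braid_r (n := n) (i := 2) (by omega) (by omega); norm_num at h; exact h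
private lemma R3 (hn : 4 ≤ n) : vρ n 1 * vρ n 2 * vσ n 1 = vσ n 2 * vρ n 1 * vρ n 2 := by
  have h := rel_mixed (n := n) (i := 1) le_rfl (by omega); norm_num at h; exact h
private lemma R3w (hn : 4 ≤ n) : vρ n 2 * vρ n 3 * vσ n 2 = vσ n 3 * vρ n 2 * vρ n 3 := by
  have h := rel_mixed (n := n) (i := 2) (by omega) (by omega); norm_num at h; exact h
private lemma C1 (hn : 4 ≤ n) : vσ n 1 * vσ n 3 = vσ n 3 * vσ n 1 :=
  rel_ss le_rfl (by omega) (by omega)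
private lemma C2 (hn : 4 ≤ n) : vρ n 1 * vρ n 3 = vρ n 3 * vρ n 1 :=
  rel_rr le_rfl (by omega) (by omega)
private lemma C3 (hn : 4 ≤ n) : vσ n 1 * vρ n 3 = vρ n 3 * vσ n 1 :=
  rel_sr le_rfl (by omega) (by omega)
private lemma C4 (hn : 4 ≤ n) : vσ n 3 * vρ n 1 = vρ n 1 * vσ n 3 :=
  rel_sr' le_rfl (by omega) (by omega)
private lemma vbD1 (hn : 4 ≤ n) :
    vσ n 2 = vρ n 1 * vρ n 2 * vσ n 1 * vρ n 2 * vρ n 1 := by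
  rw [← mul_inv_eq_one]
  calc vσ n 2 * (vρ n 1 * vρ n 2 * vσ n 1 * vρ n 2 * vρ n 1)⁻¹
      = vσ n 2 * ((1 * (vρ n 1 * vρ n 1)⁻¹) * (vσ n 2)⁻¹) * (vσ n 2 * (vρ n 1) * ((1 * (vρ n 2 * vρ n 2)⁻¹) * (vσ n 2 * (vρ n 1))⁻¹) * ((vσ n 2 * vρ n 1 * vρ n 2 * (vρ n 1 * vρ n 2 * vσ n 1)⁻¹))) := by group
    _ = 1 := by rw [R3 hn, P2 hn, Q2 hn]; group

private lemma vbD2 (hn : 4 ≤ n) :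
    vσ n 2 = vρ n 3 * vρ n 2 * vσ n 3 * vρ n 2 * vρ n 3 := by
  rw [← mul_inv_eq_one]
  calc vσ n 2 * (vρ n 3 * vρ n 2 * vσ n 3 * vρ n 2 * vρ n 3)⁻¹
      = (1 * (vρ n 3 * vρ n 3)⁻¹) * (vρ n 3 * ((1 * (vρ n 2 * vρ n 2)⁻¹) * (vρ n 3)⁻¹) * (vρ n 3 * (vρ n 2) * ((vρ n 2 * vρ n 3 * vσ n 2 * (vσ n 3 * vρ n 2 * vρ n 3)⁻¹) * (vρ n 3 * (vρ n 2))⁻¹))) := by group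
    _ = 1 := by rw [R3w hn, W2 hn, Q2 hn]; group

private lemma vbH5 (hn : 4 ≤ n) :
    vσ n 1 = vρ n 2 * vρ n 1 * vρ n 3 * vρ n 2 * vσ n 3 * vρ n 2 * vρ n 3 * vρ n 1 * vρ n 2 := by
  rw [← mul_inv_eq_one]
  calc vσ n 1 * (vρ n 2 * vρ n 1 * vρ n 3 * vρ n 2 * vσ n 3 * vρ n 2 * vρ n 3 * vρ n 1 * vρ n 2)⁻¹
      = (1 * (vρ n 2 * vρ n 2)⁻¹) * (vρ n 2 * ((1 * (vρ n 1 * vρ n 1)⁻¹) * (vρ n 2)⁻¹) * (vρ n 2 * (vρ n 1) * ((vρ n 1 * vρ n 2 * vσ n 1 * (vσ n 2 * vρ n 1 * vρ n 2)⁻¹) * (vρ n 2 * (vρ n 1))⁻¹) * (vρ n 2 * (vρ n 1) * ((vσ n 2 * (vρ n 3 * vρ n 2 * vσ n 3 * vρ n 2 * vρ n 3)⁻¹) * (vρ n 2 * (vρ n 1))⁻¹)))) := by group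
    _ = 1 := by rw [R3 hn, vbD2 hn, Q2 hn, P2 hn]; group

private lemma vbE1 (hn : 4 ≤ n) :
    vρ n 3 * vρ n 2 * vρ n 3 * vρ n 1 * vρ n 2 * vρ n 1 = vρ n 2 * vρ n 1 * vρ n 3 * vρ n 2 := by
  rw [← mul_inv_eq_one]
  calc vρ n 3 * vρ n 2 * vρ n 3 * vρ n 1 * vρ n 2 * vρ n 1 * (vρ n 2 * vρ n 1 * vρ n 3 * vρ n 2)⁻¹
      = vρ n 3 * (vρ n 2 * (vρ n 3)) * ((vρ n 1 * vρ n 2 * vρ n 1 * (vρ n 2 * vρ n 1 * vρ n 2)⁻¹) * (vρ n 3 * (vρ n 2 * (vρ n 3)))⁻¹) * ((vρ n 3 * vρ n 2 * vρ n 3 * (vρ n 2 * vρ n 3 * vρ n 2)⁻¹) * (vρ n 2 * (vρ n 3) * ((vρ n 2 * vρ n 2 * (1)⁻¹) * (vρ n 2 * (vρ n 3))⁻¹) * (vρ n 2 * ((vρ n 3 * vρ n 1 * (vρ n 1 * vρ n 3)⁻¹) * (vρ n 2)⁻¹)))) := by group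
    _ = 1 := by rw [R2 hn, R2w hn, C2 hn, Q2 hn]; group

private lemma vbStarCore (hn : 4 ≤ n) :
    vσ n 1 * vρ n 2 * vρ n 1 * vρ n 3 * vρ n 1 = vρ n 3 * vρ n 2 * vρ n 3 * vρ n 1 * vρ n 2 * vρ n 1 * vσ n 3 * vρ n 2 * vρ n 1 := by
  rw [← mul_inv_eq_one]
  calc vσ n 1 * vρ n 2 * vρ n 1 * vρ n 3 * vρ n 1 * (vρ n 3 * vρ n 2 * vρ n 3 * vρ n 1 * vρ n 2 * vρ n 1 * vσ n 3 * vρ n 2 * vρ n 1)⁻¹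
      = (vσ n 1 * (vρ n 2 * vρ n 1 * vρ n 3 * vρ n 2 * vσ n 3 * vρ n 2 * vρ n 3 * vρ n 1 * vρ n 2)⁻¹) * (vρ n 2 * (vρ n 1 * (vρ n 3 * (vρ n 2 * (vσ n 3 * (vρ n 2 * (vρ n 3 * (vρ n 1))))))) * ((vρ n 2 * vρ n 2 * (1)⁻¹) * (vρ n 2 * (vρ n 1 * (vρ n 3 * (vρ n 2 * (vσ n 3 * (vρ n 2 * (vρ n 3 * (vρ n 1))))))))⁻¹) * (vρ n 2 * (vρ n 1 * (vρ n 3 * (vρ n 2 * (vσ n 3 * (vρ n 2 * (vρ n 3)))))) * ((vρ n 1 * vρ n 1 * (1)⁻¹) * (vρ n 2 * (vρ n 1 * (vρ n 3 * (vρ n 2 * (vσ n 3 * (vρ n 2 * (vρ n 3)))))))⁻¹) * (vρ n 2 * (vρ n 1 * (vρ n 3 * (vρ n 2 * (vσ n 3 * (vρ n 2))))) * ((vρ n 3 * vρ n 3 * (1)⁻¹) * (vρ n 2 * (vρ n 1 * (vρ n 3 * (vρ n 2 * (vσ n 3 * (vρ n 2))))))⁻¹) * ((vρ n 2 * vρ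 n 1 * vρ n 3 * vρ n 2 * (vρ n 3 * vρ n 2 * vρ n 3 * vρ n 1 * vρ n 2 * vρ n 1)⁻¹))))) := by group
    _ = 1 := by rw [vbH5 hn, vbE1 hn, Q2 hn, P2 hn, W2 hn]; group

private lemma vbStarKey (hn : 4 ≤ n) :
    vσ n 1 * vρ n 3 * vρ n 1 * (vσ n 1)⁻¹ = vσ n 1 * vρ n 1 * vρ n 2 * (vσ n 1)⁻¹ * vρ n 3 * vρ n 1 * vρ n 1 * vρ n 2 * vρ n 3 * vρ n 1 * vρ n 2 * vρ n 1 * vσ n 3 * vρ n 2 * vρ n 1 * (vσ n 1)⁻¹ := by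
  rw [← mul_inv_eq_one]
  calc vσ n 1 * vρ n 3 * vρ n 1 * (vσ n 1)⁻¹ * (vσ n 1 * vρ n 1 * vρ n 2 * (vσ n 1)⁻¹ * vρ n 3 * vρ n 1 * vρ n 1 * vρ n 2 * vρ n 3 * vρ n 1 * vρ n 2 * vρ n 1 * vσ n 3 * vρ n 2 * vρ n 1 * (vσ n 1)⁻¹)⁻¹
      = vσ n 1 * ((1 * (vρ n 1 * vρ n 1)⁻¹) * (vσ n 1)⁻¹) * (vσ n 1 * (vρ n 1) * ((1 * (vρ n 2 * vρ n 2)⁻¹) * (vσ n 1 * (vρ n 1))⁻¹) * (vσ n 1 * (vρ n 1 * (vρ n 2)) * ((1 * ((vσ n 1)⁻¹ * vσ n 1)⁻¹) * (vσ n 1 * (vρ n 1 * (vρ n 2)))⁻¹) * (vσ n 1 * (vρ n 1 * (vρ n 2 * ((vσ n 1)⁻¹))) * ((vσ n 1 * vρ n 2 * vρ n 1 * vρ n 3 * vρ n 1 * (vρ n 3 * vρ n 2 * vρ n 3 * vρ n 1 * vρ n 2 * vρ n 1 * vσ n 3 * vρ n 2 * vρ n 1)⁻¹) * (vσ n 1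 * (vρ n 1 * (vρ n 2 * ((vσ n 1)⁻¹))))⁻¹) * (vσ n 1 * (vρ n 1 * (vρ n 2 * ((vσ n 1)⁻¹ * (vρ n 3)))) * ((1 * (vρ n 1 * vρ n 1)⁻¹) * (vσ n 1 * (vρ n 1 * (vρ n 2 * ((vσ n 1)⁻¹ * (vρ n 3)))))⁻¹))))) := by group
    _ = 1 := by rw [vbStarCore hn, P2 hn, Q2 hn]; group

private lemma vbSDCore (hn : 4 ≤ n) :
    vρ n 3 * vρ n 2 * vρ n 3 * vρ n 1 * vρ n 2 * vρ n 1 * vσ n 3 = vσ n 1 * vρ n 3 * vρ n 2 * vρ n 3 * vρ n 1 * vρ n 2 * vρ n 1 := by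
  rw [← mul_inv_eq_one]
  calc vρ n 3 * vρ n 2 * vρ n 3 * vρ n 1 * vρ n 2 * vρ n 1 * vσ n 3 * (vσ n 1 * vρ n 3 * vρ n 2 * vρ n 3 * vρ n 1 * vρ n 2 * vρ n 1)⁻¹
      = vρ n 3 * (vρ n 2 * (vρ n 3 * (vρ n 1 * (vρ n 2 * (vρ n 1 * (vσ n 3)))))) * ((1 * (vρ n 2 * vρ n 2)⁻¹) * (vρ n 3 * (vρ n 2 * (vρ n 3 * (vρ n 1 * (vρ n 2 * (vρ n 1 * (vσ n 3)))))))⁻¹) * (vρ n 3 * (vρ n 2 * (vρ n 3 * (vρ n 1 * (vρ n 2 * (vρ n 1 * (vσ n 3 * (vρ n 2))))))) * ((1 * (vρ n 1 * vρ n 1)⁻¹) * (vρ n 3 * (vρ n 2 * (vρ n 3 * (vρ n 1 * (vρ n 2 * (vρ n 1 * (vσ n 3 * (vρ n 2))))))))⁻¹) * ((vρ n 3 * vρ n 2 * vρ n 3 * vρ n 1 * vρ n 2 * vρ n 1 * vσ n 3 * vρ n 2 * vρ n 1 * (vσ n 1 * vρ n 2 * vρ n 1 * vρ n 3 * vρ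 n 1)⁻¹) * (vσ n 1 * (vρ n 2 * (vρ n 1 * (vρ n 3))) * ((vρ n 1 * vρ n 1 * (1)⁻¹) * (vσ n 1 * (vρ n 2 * (vρ n 1 * (vρ n 3))))⁻¹) * (vσ n 1 * ((vρ n 2 * vρ n 1 * vρ n 3 * vρ n 2 * (vρ n 3 * vρ n 2 * vρ n 3 * vρ n 1 * vρ n 2 * vρ n 1)⁻¹) * (vσ n 1)⁻¹))))) := by group
    _ = 1 := by rw [vbStarCore hn, vbE1 hn, Q2 hn, P2 hn]; group

private lemma vbSDKey (hn : 4 ≤ n) :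
    vρ n 3 * vρ n 1 = vρ n 1 * vρ n 2 * vσ n 1 * vρ n 3 * vρ n 1 * vρ n 1 * vρ n 2 * vρ n 3 * vρ n 1 * vρ n 2 * vρ n 1 * (vσ n 3)⁻¹ * vρ n 2 * vρ n 1 := by
  rw [← mul_inv_eq_one]
  calc vρ n 3 * vρ n 1 * (vρ n 1 * vρ n 2 * vσ n 1 * vρ n 3 * vρ n 1 * vρ n 1 * vρ n 2 * vρ n 3 * vρ n 1 * vρ n 2 * vρ n 1 * (vσ n 3)⁻¹ * vρ n 2 * vρ n 1)⁻¹
      = vρ n 3 * ((1 * (vρ n 2 * vρ n 2)⁻¹) * (vρ n 3)⁻¹) * ((1 * (vρ n 1 * vρ n 1)⁻¹) * (vρ n 1 * ((1 * (vρ n 2 * vρ n 2)⁻¹) * (vρ n 1)⁻¹) * (vρ n 1 * (vρ n 2) * ((vρ n 2 * vρ n 1 * vρ n 3 * vρ n 2 * (vρ n 3 * vρ n 2 * vρ n 3 * vρ n 1 * vρ n 2 * vρ n 1)⁻¹) * (vρ n 1 * (vρ n 2))⁻¹) * (vρ n 1 * (vρ n 2 * (vρ n 3 * (vρ n 2 *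 (vρ n 3 * (vρ n 1 * (vρ n 2 * (vρ n 1))))))) * ((1 * (vσ n 3 * (vσ n 3)⁻¹)⁻¹) * (vρ n 1 * (vρ n 2 * (vρ n 3 * (vρ n 2 * (vρ n 3 * (vρ n 1 * (vρ n 2 * (vρ n 1))))))))⁻¹) * (vρ n 1 * (vρ n 2) * ((vρ n 3 * vρ n 2 * vρ n 3 * vρ n 1 * vρ n 2 * vρ n 1 * vσ n 3 * (vσ n 1 * vρ n 3 * vρ n 2 * vρ n 3 * vρ n 1 * vρ n 2 * vρ n 1)⁻¹) * (vρ n 1 * (vρ n 2))⁻¹) * (vρ n 1 * (vρ n 2 * (vσ n 1 * (vρ n 3))) * ((1 * (vρ n 1 * vρ n 1)⁻¹) * (vρ n 1 * (vρ n 2 * (vσ n 1 * (vρ n 3))))⁻¹))))))) := by group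
    _ = 1 := by rw [vbSDCore hn, vbE1 hn, Q2 hn, P2 hn]; group

private lemma vbEaKey (hn : 4 ≤ n) :
    vρ n 1 * vσ n 1 * vρ n 1 * (vσ n 1)⁻¹ = vρ n 3 * vρ n 1 * vσ n 1 * vρ n 3 * vρ n 1 * (vσ n 1)⁻¹ := by
  rw [← mul_inv_eq_one]
  calc vρ n 1 * vσ n 1 * vρ n 1 * (vσ n 1)⁻¹ * (vρ n 3 * vρ n 1 * vσ n 1 * vρ n 3 * vρ n 1 * (vσ n 1)⁻¹)⁻¹
      = vρ n 1 * ((1 * (vρ n 3 * vρ n 3)⁻¹) * (vρ n 1)⁻¹) * ((vρ n 1 * vρ n 3 * (vρ n 3 * vρ n 1)⁻¹) * (vρ n 3 * (vρ n 1) * ((vρ n 3 * vσ n 1 * (vσ n 1 * vρ n 3)⁻¹) * (vρ n 3 * (vρ n 1))⁻¹))) := by group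
    _ = 1 := by rw [C2 hn, C3 hn, W2 hn]; group

private lemma vbEb0Key (hn : 4 ≤ n) :
    vσ n 2 * (vσ n 1)⁻¹ = vρ n 1 * vρ n 2 * vσ n 1 * vρ n 2 * vρ n 1 * (vσ n 1)⁻¹ := by
  rw [← mul_inv_eq_one]
  calc vσ n 2 * (vσ n 1)⁻¹ * (vρ n 1 * vρ n 2 * vσ n 1 * vρ n 2 * vρ n 1 * (vσ n 1)⁻¹)⁻¹
      = (vσ n 2 * (vρ n 1 * vρ n 2 * vσ n 1 * vρ n 2 * vρ n 1)⁻¹) := by group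
    _ = 1 := by rw [vbD1 hn]; group

private lemma vbEb1Key (hn : 4 ≤ n) :
    vρ n 1 * vσ n 2 * vρ n 1 * (vσ n 1)⁻¹ = vρ n 2 * vρ n 1 * vρ n 1 * vσ n 1 * vρ n 1 * vρ n 1 * vρ n 2 * (vσ n 1)⁻¹ := by
  rw [← mul_inv_eq_one]
  calc vρ n 1 * vσ n 2 * vρ n 1 * (vσ n 1)⁻¹ * (vρ n 2 * vρ n 1 * vρ n 1 * vσ n 1 * vρ n 1 * vρ n 1 * vρ n 2 * (vσ n 1)⁻¹)⁻¹
      = vρ n 1 * ((vσ n 2 * (vρ n 1 * vρ n 2 * vσ n 1 * vρ n 2 * vρ n 1)⁻¹) * (vρ n 1)⁻¹) * ((vρ n 1 * vρ n 1 * (1)⁻¹) * (vρ n 2 * (vσ n 1 * (vρ n 2)) * ((vρ n 1 * vρ n 1 * (1)⁻¹) * (vρ n 2 * (vσ n 1 * (vρ n 2)))⁻¹) * (vρ n 2 * (vσ n 1) * ((1 * (vρ n 1 * vρ n 1)⁻¹) * (vρ n 2 * (vσ n 1))⁻¹) * (vρ n 2 * ((1 * (vρ n 1 * vρ n 1)⁻¹)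 * (vρ n 2)⁻¹))))) := by group
    _ = 1 := by rw [vbD1 hn, P2 hn]; group

end VBLetters

section VBELevel

variable {n : ℕ}

private lemma vbD1u (hn : 4 ≤ n) :
    vσ n 2 = (vρ n 2 * vρ n 1)⁻¹ * vσ n 1 * (vρ n 2 * vρ n 1) := by
  rw [vbD1 hn, mul_inv_rev, pinv hn, qinv hn]; group

private lemma vbRelU (hn : 4 ≤ n) :
    vσ n 1 * ((vρ n 2 * vρ n 1)⁻¹ * vσ n 1 * (vρ n 2 * vρ n 1)) * vσ n 1
      = (vρ n 2 * vρ n 1)⁻¹ * vσ n 1 * (vρ n 2 * vρ n 1) * vσ n 1 *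
        ((vρ n 2 * vρ n 1)⁻¹ * vσ n 1 * (vρ n 2 * vρ n 1)) := by
  have h := R1 hn; rw [vbD1u hn] at h; exact h

private lemma c_comm (hn : 4 ≤ n) : Commute (vσ n 1) (vc n 3) := by
  have h1 : Commute (vσ n 1) (vσ n 3) := C1 hn
  simpa [vc] using h1.mul_right (Commute.refl (vσ n 1)).inv_right

private lemma c_conj (hn : 4 ≤ n) (m : ℤ) :
    (vσ n 1) ^ m * vc n 3 * (vσ n 1) ^ (-m) = vc n 3 := by
  have h := ((c_comm hn).zpow_left m).eq
  rw [zpow_neg, h]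
  exact mul_inv_cancel_right _ _

private lemma c_conj_inv (hn : 4 ≤ n) (m : ℤ) :
    (vσ n 1) ^ m * (vc n 3)⁻¹ * (vσ n 1) ^ (-m) = (vc n 3)⁻¹ := by
  have h := (((c_comm hn).inv_right).zpow_left m).eq
  rw [zpow_neg, h]
  exact mul_inv_cancel_right _ _

private lemma E_f3 (hn : 4 ≤ n) (m : ℤ) :
    vf n (m+3) 0 = vf n (m+2) 0 * (vf n (m+1) 0)⁻¹ * vf n m 0 * (vf n (m+1) 0)⁻¹ *
      vf n (m+2) 0 := by
  rw [← mul_inv_eq_one]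
  calc vf n (m+3) 0 * (vf n (m+2) 0 * (vf n (m+1) 0)⁻¹ * vf n m 0 * (vf n (m+1) 0)⁻¹ *
        vf n (m+2) 0)⁻¹
      = (vσ n 1) ^ m *
          ((vσ n 1 * (vσ n 1 * ((vρ n 2 * vρ n 1) * ((vσ n 1)⁻¹ * ((vρ n 2 * vρ n 1)⁻¹ *
            ((vσ n 1)⁻¹ * (vρ n 2 * vρ n 1))))))) *
          ((((vρ n 2 * vρ n 1)⁻¹ * vσ n 1 * (vρ n 2 * vρ n 1) * vσ n 1 *
              ((vρ n 2 * vρ n 1)⁻¹ * vσ n 1 * (vρ n 2 * vρ n 1))) *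
            (vσ n 1 * ((vρ n 2 * vρ n 1)⁻¹ * vσ n 1 * (vρ n 2 * vρ n 1)) * vσ n 1)⁻¹) *
          (vσ n 1 * (vσ n 1 * ((vρ n 2 * vρ n 1) * ((vσ n 1)⁻¹ * ((vρ n 2 * vρ n 1)⁻¹ *
            ((vσ n 1)⁻¹ * (vρ n 2 * vρ n 1)))))))⁻¹)) *
          ((vσ n 1) ^ m)⁻¹ := by
        simp only [vf, pow_zero, pow_one, one_mul]; group
    _ = 1 := by rw [vbRelU hn]; group

private lemma E_gup (hn : 4 ≤ n) (m : ℤ) :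
    vg n (m+1) 3 = (vf n (m+1) 0)⁻¹ * vg n m 3 * (vf n m 0)⁻¹ * vg n m 3 * vf n m 0 *
      vc n 3 * vf n (m+1) 0 := by
  rw [← c_conj hn m, ← mul_inv_eq_one]
  calc vg n (m+1) 3 * ((vf n (m+1) 0)⁻¹ * vg n m 3 * (vf n m 0)⁻¹ * vg n m 3 * vf n m 0 *
        ((vσ n 1) ^ m * vc n 3 * (vσ n 1) ^ (-m)) * vf n (m+1) 0)⁻¹
      = (vσ n 1) ^ m *
          (((vσ n 1 * vρ n 3 * vρ n 1 * (vσ n 1)⁻¹) *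
            (vσ n 1 * vρ n 1 * vρ n 2 * (vσ n 1)⁻¹ * vρ n 3 * vρ n 1 * vρ n 1 * vρ n 2 *
              vρ n 3 * vρ n 1 * vρ n 2 * vρ n 1 * vσ n 3 * vρ n 2 * vρ n 1 * (vσ n 1)⁻¹)⁻¹)) *
          ((vσ n 1) ^ m)⁻¹ := by
        simp only [vf, vg, vc, pow_zero, pow_succ, pow_one, zero_add, one_mul, mul_one, mul_inv_rev, inv_inv,
          pinv hn, qinv hn, winv hn]
        group
    _ = 1 := by rw [vbStarKey hn]; group

private lemma E_gdn (hn : 4 ≤ n) (m : ℤ) :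
    vg n m 3 = (vf n m 0)⁻¹ * vg n (m+1) 3 * (vf n (m+1) 0)⁻¹ * vg n (m+1) 3 *
      vf n (m+1) 0 * (vc n 3)⁻¹ * vf n m 0 := by
  rw [← c_conj_inv hn m, ← mul_inv_eq_one]
  calc vg n m 3 * ((vf n m 0)⁻¹ * vg n (m+1) 3 * (vf n (m+1) 0)⁻¹ * vg n (m+1) 3 *
        vf n (m+1) 0 * ((vσ n 1) ^ m * (vc n 3)⁻¹ * (vσ n 1) ^ (-m)) * vf n m 0)⁻¹
      = (vσ n 1) ^ m *
          (((vρ n 3 * vρ n 1) *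
            (vρ n 1 * vρ n 2 * vσ n 1 * vρ n 3 * vρ n 1 * vρ n 1 * vρ n 2 * vρ n 3 *
              vρ n 1 * vρ n 2 * vρ n 1 * (vσ n 3)⁻¹ * vρ n 2 * vρ n 1)⁻¹)) *
          ((vσ n 1) ^ m)⁻¹ := by
        simp only [vf, vg, vc, pow_zero, pow_succ, pow_one, zero_add, one_mul, mul_one, mul_inv_rev, inv_inv,
          pinv hn, qinv hn, winv hn]
        group
    _ = 1 := by rw [vbSDKey hn]; group

private lemma E_a (hn : 4 ≤ n) (m : ℤ) :
    va n m = vg n m 3 * vg n (m+1) 3 := by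
  rw [← mul_inv_eq_one]
  calc va n m * (vg n m 3 * vg n (m+1) 3)⁻¹
      = (vσ n 1) ^ m *
          (((vρ n 1 * vσ n 1 * vρ n 1 * (vσ n 1)⁻¹) *
            (vρ n 3 * vρ n 1 * vσ n 1 * vρ n 3 * vρ n 1 * (vσ n 1)⁻¹)⁻¹)) *
          ((vσ n 1) ^ m)⁻¹ := by
        simp only [vg, va, mul_inv_rev, inv_inv, pinv hn, winv hn]
        group
    _ = 1 := by rw [vbEaKey hn]; group

private lemma E_b0 (hn : 4 ≤ n) (m : ℤ) :
    vb n m 0 = (vf n m 0)⁻¹ * vf n (m+1) 0 := by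
  rw [← mul_inv_eq_one]
  calc vb n m 0 * ((vf n m 0)⁻¹ * vf n (m+1) 0)⁻¹
      = (vσ n 1) ^ m *
          (((vσ n 2 * (vσ n 1)⁻¹) *
            (vρ n 1 * vρ n 2 * vσ n 1 * vρ n 2 * vρ n 1 * (vσ n 1)⁻¹)⁻¹)) *
          ((vσ n 1) ^ m)⁻¹ := by
        simp only [vf, vb, pow_zero, pow_succ, pow_one, zero_add, one_mul, mul_one, mul_inv_rev, inv_inv,
          pinv hn, qinv hn]
        group
    _ = 1 := by rw [vbEb0Key hn]; group

private lemma E_b1 (hn : 4 ≤ n) (m : ℤ) :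
    vb n m 1 = vf n m 0 * va n m * (vf n (m+1) 0)⁻¹ := by
  rw [← mul_inv_eq_one]
  calc vb n m 1 * (vf n m 0 * va n m * (vf n (m+1) 0)⁻¹)⁻¹
      = (vσ n 1) ^ m *
          (((vρ n 1 * vσ n 2 * vρ n 1 * (vσ n 1)⁻¹) *
            (vρ n 2 * vρ n 1 * vρ n 1 * vσ n 1 * vρ n 1 * vρ n 1 * vρ n 2 * (vσ n 1)⁻¹)⁻¹)) *
          ((vσ n 1) ^ m)⁻¹ := by
        simp only [vf, vb, va, pow_zero, pow_succ, pow_one, zero_add, one_mul, mul_one, mul_inv_rev, inv_inv,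
          pinv hn, qinv hn]
        group
    _ = 1 := by rw [vbEb1Key hn]; group

private lemma E_gl (hn : 4 ≤ n) {l : ℕ} (h3 : 3 ≤ l) (hl : l ≤ n - 1) (m : ℤ) :
    vg n (m+1) l = vg n m l * va n m := by
  have hsy : vσ n 1 * vρ n l = vρ n l * vσ n 1 := rel_sr le_rfl (by omega) hl
  rw [← mul_inv_eq_one]
  calc vg n (m+1) l * (vg n m l * va n m)⁻¹
      = ((vσ n 1) ^ (m+1) * vρ n l * ((vρ n 1 * vρ n 1) * ((vσ n 1) ^ (m+1) * vρ n l)⁻¹)) *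
        (((vσ n 1) ^ (m+1) * (vρ n l * (vσ n 1)⁻¹) *
            ((vρ n 1 * vρ n 1) * ((vσ n 1) ^ (m+1) * (vρ n l * (vσ n 1)⁻¹))⁻¹)) *
          ((vσ n 1) ^ m * (((vσ n 1 * vρ n l) * (vρ n l * vσ n 1)⁻¹) * ((vσ n 1) ^ m)⁻¹))) := by
        simp only [vg, va, mul_inv_rev, inv_inv, pinv hn]
        group
    _ = 1 := by rw [hsy, P2 hn]; group

private lemma E_gl_dn (hn : 4 ≤ n) {l : ℕ} (h3 : 3 ≤ l) (hl : l ≤ n - 1) (m : ℤ) :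
    vg n m l = vg n (m+1) l * (va n m)⁻¹ := by
  rw [E_gl hn h3 hl m]; group

private lemma E_f3dn (hn : 4 ≤ n) (m : ℤ) :
    vf n m 0 = vf n (m+1) 0 * (vf n (m+2) 0)⁻¹ * vf n (m+3) 0 * (vf n (m+2) 0)⁻¹ *
      vf n (m+1) 0 := by
  rw [E_f3 hn m]; group

end VBELevel

section VBMembership

variable {n : ℕ}

private def genSet (n : ℕ) : Set (VB n) :=
  {x | ∃ l, 3 ≤ l ∧ l ≤ n - 1 ∧ x = vc n l} ∪
    {vf n 0 0, vf n 1 0, vf n 2 0} ∪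
    {x | ∃ l, 3 ≤ l ∧ l ≤ n - 1 ∧ x = vg n 0 l}

private lemma mem_c (hn : 4 ≤ n) {l : ℕ} (h3 : 3 ≤ l) (hl : l ≤ n - 1) :
    vc n l ∈ Subgroup.closure (genSet n) :=
  Subgroup.subset_closure (Or.inl (Or.inl ⟨l, h3, hl, rfl⟩))

private lemma mem_f (hn : 4 ≤ n) : ∀ m : ℤ, vf n m 0 ∈ Subgroup.closure (genSet n) := by
  have key : ∀ m : ℤ, vf n m 0 ∈ Subgroup.closure (genSet n) ∧
      vf n (m+1) 0 ∈ Subgroup.closure (genSet n) ∧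
      vf n (m+2) 0 ∈ Subgroup.closure (genSet n) := by
    intro m
    induction m using Int.induction_on with
    | zero =>
      refine ⟨?_, ?_, ?_⟩
      · exact Subgroup.subset_closure (Or.inl (Or.inr (Set.mem_insert _ _)))
      · rw [show ((0:ℤ)+1) = 1 by norm_num]
        exact Subgroup.subset_closure
          (Or.inl (Or.inr (Set.mem_insert_of_mem _ (Set.mem_insert _ _))))
      · rw [show ((0:ℤ)+2) = 2 by norm_num]
        exact Subgroup.subset_closure
          (Or.inl (Or.inr (Set.mem_insert_of_mem _ (Set.mem_insert_of_mem _ rfl))))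
    | succ k ih =>
      obtain ⟨h0, h1, h2⟩ := ih
      refine ⟨h1, ?_, ?_⟩
      · rw [show ((k:ℤ)+1+1) = k+2 by ring]; exact h2
      · rw [show ((k:ℤ)+1+2) = k+3 by ring, E_f3 hn k]
        exact mul_mem (mul_mem (mul_mem (mul_mem h2 (inv_mem h1)) h0) (inv_mem h1)) h2
    | pred k ih =>
      obtain ⟨h0, h1, h2⟩ := ih
      refine ⟨?_, ?_, ?_⟩
      · have e := E_f3dn hn (-(k:ℤ)-1)
        rw [show (-(k:ℤ)-1+1) = -k by ring, show (-(k:ℤ)-1+2) = -(k:ℤ)+1 by ring,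
          show (-(k:ℤ)-1+3) = -(k:ℤ)+2 by ring] at e
        rw [e]
        exact mul_mem (mul_mem (mul_mem (mul_mem h0 (inv_mem h1)) h2) (inv_mem h1)) h0
      · rw [show (-(k:ℤ)-1+1) = -(k:ℤ) by ring]; exact h0
      · rw [show (-(k:ℤ)-1+2) = -(k:ℤ)+1 by ring]; exact h1
  exact fun m => (key m).1

private lemma mem_g3 (hn : 4 ≤ n) : ∀ m : ℤ, vg n m 3 ∈ Subgroup.closure (genSet n) := by
  intro m
  induction m using Int.induction_on with
  | zero => exact Subgroup.subset_closure (Or.inr ⟨3, le_rfl, by omega, rfl⟩)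
  | succ k ih =>
    rw [E_gup hn k]
    exact mul_mem (mul_mem (mul_mem (mul_mem (mul_mem (mul_mem
      (inv_mem (mem_f hn (k+1))) ih) (inv_mem (mem_f hn k))) ih) (mem_f hn k))
      (mem_c hn le_rfl (by omega))) (mem_f hn (k+1))
  | pred k ih =>
    have e := E_gdn hn (-(k:ℤ)-1)
    rw [show (-(k:ℤ)-1+1) = -(k:ℤ) by ring] at e
    rw [e]
    exact mul_mem (mul_mem (mul_mem (mul_mem (mul_mem (mul_mem
      (inv_mem (mem_f hn (-(k:ℤ)-1))) ih) (inv_mem (mem_f hn (-(k:ℤ))))) ih)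
      (mem_f hn (-(k:ℤ)))) (inv_mem (mem_c hn le_rfl (by omega)))) (mem_f hn (-(k:ℤ)-1))

private lemma mem_a (hn : 4 ≤ n) (m : ℤ) : va n m ∈ Subgroup.closure (genSet n) := by
  rw [E_a hn m]; exact mul_mem (mem_g3 hn m) (mem_g3 hn (m+1))

private lemma mem_gl (hn : 4 ≤ n) {l : ℕ} (h3 : 3 ≤ l) (hl : l ≤ n - 1) :
    ∀ m : ℤ, vg n m l ∈ Subgroup.closure (genSet n) := by
  intro m
  induction m using Int.induction_on with
  | zero => exact Subgroup.subset_closure (Or.inr ⟨l, h3, hl, rfl⟩)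
  | succ k ih => rw [E_gl hn h3 hl k]; exact mul_mem ih (mem_a hn k)
  | pred k ih =>
    have e := E_gl_dn hn h3 hl (-(k:ℤ)-1)
    rw [show (-(k:ℤ)-1+1) = -(k:ℤ) by ring] at e
    rw [e]
    exact mul_mem ih (inv_mem (mem_a hn (-(k:ℤ)-1)))

private lemma mem_b0 (hn : 4 ≤ n) (m : ℤ) : vb n m 0 ∈ Subgroup.closure (genSet n) := by
  rw [E_b0 hn m]; exact mul_mem (inv_mem (mem_f hn m)) (mem_f hn (m+1))

private lemma mem_b1 (hn : 4 ≤ n) (m : ℤ) : vb n m 1 ∈ Subgroup.closure (genSet n) := by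
  rw [E_b1 hn m]
  exact mul_mem (mul_mem (mem_f hn m) (mem_a hn m)) (inv_mem (mem_f hn (m+1)))

end VBMembership

section VBPhi

variable {n : ℕ}

private def phiFA : VBGen n → Multiplicative ℤ :=
  fun x => Sum.casesOn x (fun _ => Multiplicative.ofAdd 1) (fun _ => 1)

private def phiFB : VBGen n → Multiplicative (ZMod 2) :=
  fun x => Sum.casesOn x (fun _ => 1) (fun _ => Multiplicative.ofAdd 1)

private lemma liftA_fσ {i : ℕ} (h1 : 1 ≤ i) (h2 : i - 1 < n - 1) :
    FreeGroup.lift phiFA (fσ n i) = Multiplicative.ofAdd 1 := by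
  rw [fσ, dif_pos (⟨h1, h2⟩ : 1 ≤ i ∧ i - 1 < n - 1), FreeGroup.lift_apply_of]; rfl

private lemma liftA_fρ {i : ℕ} (h1 : 1 ≤ i) (h2 : i - 1 < n - 1) :
    FreeGroup.lift phiFA (fρ n i) = 1 := by
  rw [fρ, dif_pos (⟨h1, h2⟩ : 1 ≤ i ∧ i - 1 < n - 1), FreeGroup.lift_apply_of]; rfl

private lemma liftB_fσ {i : ℕ} (h1 : 1 ≤ i) (h2 : i - 1 < n - 1) :
    FreeGroup.lift phiFB (fσ n i) = 1 := by
  rw [fσ, dif_pos (⟨h1, h2⟩ : 1 ≤ i ∧ i - 1 < n - 1), FreeGroup.lift_apply_of]; rfl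

private lemma liftB_fρ {i : ℕ} (h1 : 1 ≤ i) (h2 : i - 1 < n - 1) :
    FreeGroup.lift phiFB (fρ n i) = Multiplicative.ofAdd 1 := by
  rw [fρ, dif_pos (⟨h1, h2⟩ : 1 ≤ i ∧ i - 1 < n - 1), FreeGroup.lift_apply_of]; rfl

private lemma phiA_rels : ∀ r ∈ vbRels n, FreeGroup.lift (phiFA (n := n)) r = 1 := by
  rintro r hr
  rcases hr with (⟨i, j, h1, h2, h3, hc⟩ | ⟨i, h1, h2, hc⟩) | ⟨i, h1, h2, rfl⟩
  · have e1 := liftA_fσ (n := n) (i := i) h1 (by omega)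
    have e2 := liftA_fσ (n := n) (i := j) (by omega) (by omega)
    have e3 := liftA_fρ (n := n) (i := i) h1 (by omega)
    have e4 := liftA_fρ (n := n) (i := j) (by omega) (by omega)
    rcases hc with rfl | rfl | rfl | rfl <;>
      simp only [map_mul, map_inv, e1, e2, e3, e4] <;> decide
  · have e1 := liftA_fσ (n := n) (i := i) h1 (by omega)
    have e2 := liftA_fσ (n := n) (i := i+1) (by omega) (by omega)
    have e3 := liftA_fρ (n := n) (i := i) h1 (by omega)
    have e4 := liftA_fρ (n := n) (i := i+1) (by omega) (by omega)
    rcases hc with rfl | rfl | rfl <;>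
      simp only [map_mul, map_inv, e1, e2, e3, e4] <;> decide
  · have e3 := liftA_fρ (n := n) (i := i) h1 (by omega)
    simp only [map_mul, e3]; decide

private lemma phiB_rels : ∀ r ∈ vbRels n, FreeGroup.lift (phiFB (n := n)) r = 1 := by
  rintro r hr
  rcases hr with (⟨i, j, h1, h2, h3, hc⟩ | ⟨i, h1, h2, hc⟩) | ⟨i, h1, h2, rfl⟩
  · have e1 := liftB_fσ (n := n) (i := i) h1 (by omega)
    have e2 := liftB_fσ (n := n) (i := j) (by omega) (by omega)
    have e3 := liftB_fρ (n := n) (i := i) h1 (by omega)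
    have e4 := liftB_fρ (n := n) (i := j) (by omega) (by omega)
    rcases hc with rfl | rfl | rfl | rfl <;>
      simp only [map_mul, map_inv, e1, e2, e3, e4] <;> decide
  · have e1 := liftB_fσ (n := n) (i := i) h1 (by omega)
    have e2 := liftB_fσ (n := n) (i := i+1) (by omega) (by omega)
    have e3 := liftB_fρ (n := n) (i := i) h1 (by omega)
    have e4 := liftB_fρ (n := n) (i := i+1) (by omega) (by omega)
    rcases hc with rfl | rfl | rfl <;>
      simp only [map_mul, map_inv, e1, e2, e3, e4] <;> decide
  · have e3 := liftB_fρ (n := n) (i := i) h1 (by omega)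
    simp only [map_mul, e3]; decide

private def vbφA : VB n →* Multiplicative ℤ := PresentedGroup.toGroup phiA_rels
private def vbφB : VB n →* Multiplicative (ZMod 2) := PresentedGroup.toGroup phiB_rels

private lemma vbφA_mk (w : FreeGroup (VBGen n)) :
    vbφA (PresentedGroup.mk (vbRels n) w) = FreeGroup.lift phiFA w := rfl

private lemma vbφB_mk (w : FreeGroup (VBGen n)) :
    vbφB (PresentedGroup.mk (vbRels n) w) = FreeGroup.lift phiFB w := rfl

private lemma vbφA_s (hn : 4 ≤ n) : vbφA (vσ n 1) = Multiplicative.ofAdd 1 := by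
  rw [vσ, vbφA_mk]; exact liftA_fσ le_rfl (by omega)

private lemma vbφA_p (hn : 4 ≤ n) : vbφA (vρ n 1) = 1 := by
  rw [vρ, vbφA_mk]; exact liftA_fρ le_rfl (by omega)

private lemma vbφB_s (hn : 4 ≤ n) : vbφB (vσ n 1) = 1 := by
  rw [vσ, vbφB_mk]; exact liftB_fσ le_rfl (by omega)

private lemma vbφB_p (hn : 4 ≤ n) : vbφB (vρ n 1) = Multiplicative.ofAdd 1 := by
  rw [vρ, vbφB_mk]; exact liftB_fρ le_rfl (by omega)

end VBPhi

section VBSubset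

variable {n : ℕ}

open scoped commutatorElement in
private lemma braid_quot {x y : VB n} (hb : x * y * x = y * x * y) :
    y * x⁻¹ ∈ commutator (VB n) := by
  have key : ⁅x * y, x⁆ = y * x⁻¹ := by
    rw [commutatorElement_def, ← mul_inv_eq_one]
    calc x * y * x * (x * y)⁻¹ * x⁻¹ * (y * x⁻¹)⁻¹
        = (x * y * x) * (y * x * y)⁻¹ := by group
      _ = 1 := by rw [hb]; group
  rw [commutator_def, ← key]
  exact Subgroup.commutator_mem_commutator (Subgroup.mem_top _) (Subgroup.mem_top _)

private lemma sub_c (hn : 4 ≤ n) :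
    ∀ l : ℕ, 2 ≤ l → l ≤ n - 1 → vσ n l * (vσ n 1)⁻¹ ∈ commutator (VB n) := by
  intro l
  induction l with
  | zero => intro h; omega
  | succ l ih =>
    intro h2 hl
    rcases Nat.lt_or_ge l 2 with hl2 | hl2
    · have hl1 : l = 1 := by omega
      subst hl1
      simpa using braid_quot (R1 hn)
    · have hb := rel_braid_s (n := n) (i := l) (by omega) (by omega)
      have e : vσ n (l+1) * (vσ n 1)⁻¹
          = (vσ n (l+1) * (vσ n l)⁻¹) * (vσ n l * (vσ n 1)⁻¹) := by group
      rw [e]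
      exact mul_mem (braid_quot hb) (ih hl2 (by omega))

private lemma sub_r (hn : 4 ≤ n) :
    ∀ l : ℕ, 2 ≤ l → l ≤ n - 1 → vρ n l * (vρ n 1)⁻¹ ∈ commutator (VB n) := by
  intro l
  induction l with
  | zero => intro h; omega
  | succ l ih =>
    intro h2 hl
    rcases Nat.lt_or_ge l 2 with hl2 | hl2
    · have hl1 : l = 1 := by omega
      subst hl1
      simpa using braid_quot (R2 hn)
    · have hb := rel_braid_r (n := n) (i := l) (by omega) (by omega)
      have e : vρ n (l+1) * (vρ n 1)⁻¹
          = (vρ n (l+1) * (vρ n l)⁻¹) * (vρ n l * (vρ n 1)⁻¹) := by group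
      rw [e]
      exact mul_mem (braid_quot hb) (ih hl2 (by omega))

private lemma sub_rr (hn : 4 ≤ n) {l : ℕ} (h2 : 2 ≤ l) (hl : l ≤ n - 1) :
    vρ n l * vρ n 1 ∈ commutator (VB n) := by
  have e : vρ n l * vρ n 1 = (vρ n l * (vρ n 1)⁻¹) * (vρ n 1 * vρ n 1) := by group
  rw [e]
  refine mul_mem (sub_r hn l h2 hl) ?_
  rw [P2 hn]; exact one_mem _

private lemma subset_comm (hn : 4 ≤ n) :
    Subgroup.closure (genSet n) ≤ commutator (VB n) := by
  rw [Subgroup.closure_le]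
  rintro x hx
  simp only [genSet, Set.mem_union, Set.mem_insert_iff, Set.mem_singleton_iff,
    Set.mem_setOf_eq] at hx
  rcases hx with (⟨l, h3, hl, rfl⟩ | hx) | ⟨l, h3, hl, rfl⟩
  · exact sub_c hn l (by omega) hl
  · have hf : ∀ m : ℤ, vf n m 0 ∈ commutator (VB n) := by
      intro m
      have e2 : vf n m 0 = (vσ n 1) ^ m * (vρ n 2 * vρ n 1) * ((vσ n 1) ^ m)⁻¹ := by
        simp only [vf, pow_zero, zero_add, one_mul, pow_one, zpow_neg]
      rw [e2]
      exact Subgroup.Normal.conj_mem inferInstance _ (sub_rr hn (by omega) (by omega)) _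
    rcases hx with rfl | rfl | rfl
    · exact hf 0
    · exact hf 1
    · exact hf 2
  · have e : vg n 0 l = (vσ n 1) ^ (0:ℤ) * (vρ n l * vρ n 1) * ((vσ n 1) ^ (0:ℤ))⁻¹ := by
      simp only [vg, zpow_neg, neg_zero, zpow_zero, inv_one]
    rw [e]
    exact Subgroup.Normal.conj_mem inferInstance _ (sub_rr hn (by omega) hl) _

end VBSubset

section VBSteps

variable {n : ℕ}

private lemma st1t (hn : 4 ≤ n) (m : ℤ) :
    (vσ n 1) ^ m * vρ n 1 * vσ n 1 = va n m * ((vσ n 1) ^ (m+1) * vρ n 1) := by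
  rw [← mul_inv_eq_one]
  calc (vσ n 1) ^ m * vρ n 1 * vσ n 1 * (va n m * ((vσ n 1) ^ (m+1) * vρ n 1))⁻¹
      = ((vσ n 1) ^ m * (vρ n 1 * vσ n 1)) *
          ((vρ n 1 * vρ n 1)⁻¹ * ((vσ n 1) ^ m * (vρ n 1 * vσ n 1))⁻¹) := by
        simp only [va]; group
    _ = 1 := by rw [P2 hn]; group

private lemma st1invt (hn : 4 ≤ n) (m : ℤ) :
    (vσ n 1) ^ m * vρ n 1 * (vσ n 1)⁻¹ = (va n (m-1))⁻¹ * ((vσ n 1) ^ (m-1) * vρ n 1) := by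
  rw [← mul_inv_eq_one]
  calc (vσ n 1) ^ m * vρ n 1 * (vσ n 1)⁻¹ * ((va n (m-1))⁻¹ * ((vσ n 1) ^ (m-1) * vρ n 1))⁻¹
      = (vσ n 1) ^ m * ((vρ n 1 * vρ n 1) * ((vσ n 1) ^ m)⁻¹) := by
        simp only [va]; group
    _ = 1 := by rw [P2 hn]; group

private lemma st2f (hn : 4 ≤ n) (m : ℤ) :
    (vσ n 1) ^ m * vσ n 2 = vb n m 0 * (vσ n 1) ^ (m+1) := by
  simp only [vb, pow_zero, one_mul, mul_one]; group

private lemma st2t (hn : 4 ≤ n) (m : ℤ) :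
    (vσ n 1) ^ m * vρ n 1 * vσ n 2 = vb n m 1 * ((vσ n 1) ^ (m+1) * vρ n 1) := by
  rw [← mul_inv_eq_one]
  calc (vσ n 1) ^ m * vρ n 1 * vσ n 2 * (vb n m 1 * ((vσ n 1) ^ (m+1) * vρ n 1))⁻¹
      = ((vσ n 1) ^ m * (vρ n 1 * vσ n 2)) *
          ((vρ n 1 * vρ n 1)⁻¹ * ((vσ n 1) ^ m * (vρ n 1 * vσ n 2))⁻¹) := by
        simp only [vb, pow_one]; group
    _ = 1 := by rw [P2 hn]; group

private lemma st2invf (hn : 4 ≤ n) (m : ℤ) :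
    (vσ n 1) ^ m * (vσ n 2)⁻¹ = (vb n (m-1) 0)⁻¹ * (vσ n 1) ^ (m-1) := by
  simp only [vb, pow_zero, one_mul, mul_one]; group

private lemma st2invt (hn : 4 ≤ n) (m : ℤ) :
    (vσ n 1) ^ m * vρ n 1 * (vσ n 2)⁻¹ = (vb n (m-1) 1)⁻¹ * ((vσ n 1) ^ (m-1) * vρ n 1) := by
  rw [← mul_inv_eq_one]
  calc (vσ n 1) ^ m * vρ n 1 * (vσ n 2)⁻¹ *
        ((vb n (m-1) 1)⁻¹ * ((vσ n 1) ^ (m-1) * vρ n 1))⁻¹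
      = (vσ n 1) ^ m * ((vρ n 1 * vρ n 1) * ((vσ n 1) ^ m)⁻¹) := by
        simp only [vb, pow_one]; group
    _ = 1 := by rw [P2 hn]; group

private lemma stlf (hn : 4 ≤ n) {l : ℕ} (h3 : 3 ≤ l) (hl : l ≤ n - 1) (m : ℤ) :
    (vσ n 1) ^ m * vσ n l = vc n l * (vσ n 1) ^ (m+1) := by
  have h1 : Commute (vσ n 1) (vσ n l) := rel_ss le_rfl (by omega) hl
  calc (vσ n 1) ^ m * vσ n l = vσ n l * (vσ n 1) ^ m := (h1.symm.zpow_right m).eq.symm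
    _ = vc n l * (vσ n 1) ^ (m+1) := by rw [vc]; group

private lemma stlt (hn : 4 ≤ n) {l : ℕ} (h3 : 3 ≤ l) (hl : l ≤ n - 1) (m : ℤ) :
    (vσ n 1) ^ m * vρ n 1 * vσ n l = vc n l * ((vσ n 1) ^ (m+1) * vρ n 1) := by
  have h2 : Commute (vσ n l) (vρ n 1) := rel_sr' le_rfl (by omega) hl
  calc (vσ n 1) ^ m * vρ n 1 * vσ n l = (vσ n 1) ^ m * (vσ n l * vρ n 1) := by
        rw [mul_assoc, ← h2.eq]
    _ = ((vσ n 1) ^ m * vσ n l) * vρ n 1 := by group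
    _ = (vc n l * (vσ n 1) ^ (m+1)) * vρ n 1 := by rw [stlf hn h3 hl m]
    _ = vc n l * ((vσ n 1) ^ (m+1) * vρ n 1) := by group

private lemma stlinvf (hn : 4 ≤ n) {l : ℕ} (h3 : 3 ≤ l) (hl : l ≤ n - 1) (m : ℤ) :
    (vσ n 1) ^ m * (vσ n l)⁻¹ = (vc n l)⁻¹ * (vσ n 1) ^ (m-1) := by
  have h1 : Commute (vσ n 1) (vσ n l) := rel_ss le_rfl (by omega) hl
  have hc : Commute ((vσ n 1) ^ (m-1)) (vσ n l)⁻¹ := (h1.zpow_left (m-1)).inv_right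
  calc (vσ n 1) ^ m * (vσ n l)⁻¹ = (vσ n 1) * ((vσ n 1) ^ (m-1) * (vσ n l)⁻¹) := by group
    _ = (vσ n 1) * ((vσ n l)⁻¹ * (vσ n 1) ^ (m-1)) := by rw [hc.eq]
    _ = (vc n l)⁻¹ * (vσ n 1) ^ (m-1) := by rw [vc]; group

private lemma stlinvt (hn : 4 ≤ n) {l : ℕ} (h3 : 3 ≤ l) (hl : l ≤ n - 1) (m : ℤ) :
    (vσ n 1) ^ m * vρ n 1 * (vσ n l)⁻¹ = (vc n l)⁻¹ * ((vσ n 1) ^ (m-1) * vρ n 1) := by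
  have h2 : Commute (vσ n l) (vρ n 1) := rel_sr' le_rfl (by omega) hl
  calc (vσ n 1) ^ m * vρ n 1 * (vσ n l)⁻¹ = (vσ n 1) ^ m * ((vσ n l)⁻¹ * vρ n 1) := by
        rw [mul_assoc, ← h2.inv_left.eq]
    _ = ((vσ n 1) ^ m * (vσ n l)⁻¹) * vρ n 1 := by group
    _ = ((vc n l)⁻¹ * (vσ n 1) ^ (m-1)) * vρ n 1 := by rw [stlinvf hn h3 hl m]
    _ = (vc n l)⁻¹ * ((vσ n 1) ^ (m-1) * vρ n 1) := by group

private lemma strho2f (hn : 4 ≤ n) (m : ℤ) :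
    (vσ n 1) ^ m * vρ n 2 = vf n m 0 * ((vσ n 1) ^ m * vρ n 1) := by
  rw [← mul_inv_eq_one]
  calc (vσ n 1) ^ m * vρ n 2 * (vf n m 0 * ((vσ n 1) ^ m * vρ n 1))⁻¹
      = ((vσ n 1) ^ m * vρ n 2) * ((vρ n 1 * vρ n 1)⁻¹ * ((vσ n 1) ^ m * vρ n 2)⁻¹) := by
        simp only [vf, pow_zero, zero_add, pow_one, one_mul]; group
    _ = 1 := by rw [P2 hn]; group

private lemma strho2t (hn : 4 ≤ n) (m : ℤ) :
    (vσ n 1) ^ m * vρ n 1 * vρ n 2 = (vf n m 0)⁻¹ * (vσ n 1) ^ m := by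
  rw [← mul_inv_eq_one]
  calc (vσ n 1) ^ m * vρ n 1 * vρ n 2 * ((vf n m 0)⁻¹ * (vσ n 1) ^ m)⁻¹
      = ((vσ n 1) ^ m * vρ n 1) * ((vρ n 2 * vρ n 2) * ((vσ n 1) ^ m * vρ n 1)⁻¹) *
          ((vσ n 1) ^ m * ((vρ n 1 * vρ n 1) * ((vσ n 1) ^ m)⁻¹)) := by
        simp only [vf, pow_zero, zero_add, pow_one, one_mul]; group
    _ = 1 := by rw [Q2 hn, P2 hn]; group

private lemma strholf (hn : 4 ≤ n) {l : ℕ} (h3 : 3 ≤ l) (hl : l ≤ n - 1) (m : ℤ) :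
    (vσ n 1) ^ m * vρ n l = vg n m l * ((vσ n 1) ^ m * vρ n 1) := by
  rw [← mul_inv_eq_one]
  calc (vσ n 1) ^ m * vρ n l * (vg n m l * ((vσ n 1) ^ m * vρ n 1))⁻¹
      = ((vσ n 1) ^ m * vρ n l) * ((vρ n 1 * vρ n 1)⁻¹ * ((vσ n 1) ^ m * vρ n l)⁻¹) := by
        simp only [vg]; group
    _ = 1 := by rw [P2 hn]; group

private lemma strholt (hn : 4 ≤ n) {l : ℕ} (h3 : 3 ≤ l) (hl : l ≤ n - 1) (m : ℤ) :
    (vσ n 1) ^ m * vρ n 1 * vρ n l = vg n m l * (vσ n 1) ^ m := by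
  have hpy : vρ n 1 * vρ n l = vρ n l * vρ n 1 := rel_rr le_rfl (by omega) hl
  rw [← mul_inv_eq_one]
  calc (vσ n 1) ^ m * vρ n 1 * vρ n l * (vg n m l * (vσ n 1) ^ m)⁻¹
      = (vσ n 1) ^ m * (((vρ n 1 * vρ n l) * (vρ n l * vρ n 1)⁻¹) * ((vσ n 1) ^ m)⁻¹) := by
        simp only [vg]; group
    _ = 1 := by rw [hpy]; group

end VBSteps

theorem VB_commutator_generators' (n : ℕ) (hn : 4 ≤ n) :
    commutator (VB n) = Subgroup.closure (genSet n) := by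
  refine le_antisymm ?_ (subset_comm hn)
  intro x hx
  have hofσ : ∀ i : Fin (n-1), (PresentedGroup.of (Sum.inl i) : VB n) = vσ n ((i:ℕ)+1) := by
    intro i
    have h2 : (i:ℕ)+1-1 < n-1 := by simpa using i.isLt
    rw [vσ, fσ, dif_pos (⟨by omega, h2⟩ : 1 ≤ (i:ℕ)+1 ∧ (i:ℕ)+1-1 < n-1)]
    have e : (⟨(i:ℕ)+1-1, h2⟩ : Fin (n-1)) = i := by ext; simp
    rw [e]; rfl
  have hofρ : ∀ i : Fin (n-1), (PresentedGroup.of (Sum.inr i) : VB n) = vρ n ((i:ℕ)+1) := by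
    intro i
    have h2 : (i:ℕ)+1-1 < n-1 := by simpa using i.isLt
    rw [vρ, fρ, dif_pos (⟨by omega, h2⟩ : 1 ≤ (i:ℕ)+1 ∧ (i:ℕ)+1-1 < n-1)]
    have e : (⟨(i:ℕ)+1-1, h2⟩ : Fin (n-1)) = i := by ext; simp
    rw [e]; rfl
  let P : VB n → Prop := fun y => ∃ h, h ∈ Subgroup.closure (genSet n) ∧ ∃ m : ℤ, ∃ t : Bool,
    y = h * (vσ n 1) ^ m * (cond t (vρ n 1) 1)
  have hstep : ∀ (j : VBGen n) (k : VB n), P k →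
      P (k * PresentedGroup.of j) ∧ P (k * (PresentedGroup.of j)⁻¹) := by
    rintro (i | i) k ⟨h, hh, m, t, rfl⟩
    · rw [hofσ i]
      have hi2 : (i:ℕ)+1 ≤ n-1 := i.isLt
      rcases Nat.lt_or_ge (i:ℕ) 1 with hc0 | hc1
      · have e0 : (i:ℕ)+1 = 1 := by omega
        rw [e0]
        cases t with
        | false =>
          refine ⟨⟨h, hh, m+1, false, ?_⟩, ⟨h, hh, m-1, false, ?_⟩⟩
          · show h * (vσ n 1) ^ m * 1 * vσ n 1 = h * (vσ n 1) ^ (m+1) * 1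
            group
          · show h * (vσ n 1) ^ m * 1 * (vσ n 1)⁻¹ = h * (vσ n 1) ^ (m-1) * 1
            group
        | true =>
          refine ⟨⟨h * va n m, mul_mem hh (mem_a hn m), m+1, true, ?_⟩,
            ⟨h * (va n (m-1))⁻¹, mul_mem hh (inv_mem (mem_a hn (m-1))), m-1, true, ?_⟩⟩
          · show h * (vσ n 1) ^ m * vρ n 1 * vσ n 1 = h * va n m * (vσ n 1) ^ (m+1) * vρ n 1
            calc h * (vσ n 1) ^ m * vρ n 1 * vσ n 1
                = h * ((vσ n 1) ^ m * vρ n 1 * vσ n 1) := by group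
              _ = h * (va n m * ((vσ n 1) ^ (m+1) * vρ n 1)) := by rw [st1t hn m]
              _ = h * va n m * (vσ n 1) ^ (m+1) * vρ n 1 := by group
          · show h * (vσ n 1) ^ m * vρ n 1 * (vσ n 1)⁻¹
                = h * (va n (m-1))⁻¹ * (vσ n 1) ^ (m-1) * vρ n 1
            calc h * (vσ n 1) ^ m * vρ n 1 * (vσ n 1)⁻¹
                = h * ((vσ n 1) ^ m * vρ n 1 * (vσ n 1)⁻¹) := by group
              _ = h * ((va n (m-1))⁻¹ * ((vσ n 1) ^ (m-1) * vρ n 1)) := by rw [st1invt hn m]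
              _ = h * (va n (m-1))⁻¹ * (vσ n 1) ^ (m-1) * vρ n 1 := by group
      · rcases Nat.lt_or_ge (i:ℕ) 2 with hc1' | hc2
        · have e0 : (i:ℕ)+1 = 2 := by omega
          rw [e0]
          cases t with
          | false =>
            refine ⟨⟨h * vb n m 0, mul_mem hh (mem_b0 hn m), m+1, false, ?_⟩,
              ⟨h * (vb n (m-1) 0)⁻¹, mul_mem hh (inv_mem (mem_b0 hn (m-1))), m-1, false, ?_⟩⟩
            · show h * (vσ n 1) ^ m * 1 * vσ n 2 = h * vb n m 0 * (vσ n 1) ^ (m+1) * 1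
              calc h * (vσ n 1) ^ m * 1 * vσ n 2
                  = h * ((vσ n 1) ^ m * vσ n 2) := by group
                _ = h * (vb n m 0 * (vσ n 1) ^ (m+1)) := by rw [st2f hn m]
                _ = h * vb n m 0 * (vσ n 1) ^ (m+1) * 1 := by group
            · show h * (vσ n 1) ^ m * 1 * (vσ n 2)⁻¹ = h * (vb n (m-1) 0)⁻¹ * (vσ n 1) ^ (m-1) * 1
              calc h * (vσ n 1) ^ m * 1 * (vσ n 2)⁻¹
                  = h * ((vσ n 1) ^ m * (vσ n 2)⁻¹) := by group
                _ = h * ((vb n (m-1) 0)⁻¹ * (vσ n 1) ^ (m-1)) := by rw [st2invf hn m]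
                _ = h * (vb n (m-1) 0)⁻¹ * (vσ n 1) ^ (m-1) * 1 := by group
          | true =>
            refine ⟨⟨h * vb n m 1, mul_mem hh (mem_b1 hn m), m+1, true, ?_⟩,
              ⟨h * (vb n (m-1) 1)⁻¹, mul_mem hh (inv_mem (mem_b1 hn (m-1))), m-1, true, ?_⟩⟩
            · show h * (vσ n 1) ^ m * vρ n 1 * vσ n 2 = h * vb n m 1 * (vσ n 1) ^ (m+1) * vρ n 1
              calc h * (vσ n 1) ^ m * vρ n 1 * vσ n 2
                  = h * ((vσ n 1) ^ m * vρ n 1 * vσ n 2) := by group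
                _ = h * (vb n m 1 * ((vσ n 1) ^ (m+1) * vρ n 1)) := by rw [st2t hn m]
                _ = h * vb n m 1 * (vσ n 1) ^ (m+1) * vρ n 1 := by group
            · show h * (vσ n 1) ^ m * vρ n 1 * (vσ n 2)⁻¹
                  = h * (vb n (m-1) 1)⁻¹ * (vσ n 1) ^ (m-1) * vρ n 1
              calc h * (vσ n 1) ^ m * vρ n 1 * (vσ n 2)⁻¹
                  = h * ((vσ n 1) ^ m * vρ n 1 * (vσ n 2)⁻¹) := by group
                _ = h * ((vb n (m-1) 1)⁻¹ * ((vσ n 1) ^ (m-1) * vρ n 1)) := by rw [st2invt hn m]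
                _ = h * (vb n (m-1) 1)⁻¹ * (vσ n 1) ^ (m-1) * vρ n 1 := by group
        · have h3 : 3 ≤ (i:ℕ)+1 := by omega
          cases t with
          | false =>
            refine ⟨⟨h * vc n ((i:ℕ)+1), mul_mem hh (mem_c hn h3 hi2), m+1, false, ?_⟩,
              ⟨h * (vc n ((i:ℕ)+1))⁻¹, mul_mem hh (inv_mem (mem_c hn h3 hi2)), m-1, false, ?_⟩⟩
            · show h * (vσ n 1) ^ m * 1 * vσ n ((i:ℕ)+1)
                  = h * vc n ((i:ℕ)+1) * (vσ n 1) ^ (m+1) * 1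
              calc h * (vσ n 1) ^ m * 1 * vσ n ((i:ℕ)+1)
                  = h * ((vσ n 1) ^ m * vσ n ((i:ℕ)+1)) := by group
                _ = h * (vc n ((i:ℕ)+1) * (vσ n 1) ^ (m+1)) := by rw [stlf hn h3 hi2 m]
                _ = h * vc n ((i:ℕ)+1) * (vσ n 1) ^ (m+1) * 1 := by group
            · show h * (vσ n 1) ^ m * 1 * (vσ n ((i:ℕ)+1))⁻¹
                  = h * (vc n ((i:ℕ)+1))⁻¹ * (vσ n 1) ^ (m-1) * 1
              calc h * (vσ n 1) ^ m * 1 * (vσ n ((i:ℕ)+1))⁻¹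
                  = h * ((vσ n 1) ^ m * (vσ n ((i:ℕ)+1))⁻¹) := by group
                _ = h * ((vc n ((i:ℕ)+1))⁻¹ * (vσ n 1) ^ (m-1)) := by rw [stlinvf hn h3 hi2 m]
                _ = h * (vc n ((i:ℕ)+1))⁻¹ * (vσ n 1) ^ (m-1) * 1 := by group
          | true =>
            refine ⟨⟨h * vc n ((i:ℕ)+1), mul_mem hh (mem_c hn h3 hi2), m+1, true, ?_⟩,
              ⟨h * (vc n ((i:ℕ)+1))⁻¹, mul_mem hh (inv_mem (mem_c hn h3 hi2)), m-1, true, ?_⟩⟩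
            · show h * (vσ n 1) ^ m * vρ n 1 * vσ n ((i:ℕ)+1)
                  = h * vc n ((i:ℕ)+1) * (vσ n 1) ^ (m+1) * vρ n 1
              calc h * (vσ n 1) ^ m * vρ n 1 * vσ n ((i:ℕ)+1)
                  = h * ((vσ n 1) ^ m * vρ n 1 * vσ n ((i:ℕ)+1)) := by group
                _ = h * (vc n ((i:ℕ)+1) * ((vσ n 1) ^ (m+1) * vρ n 1)) := by rw [stlt hn h3 hi2 m]
                _ = h * vc n ((i:ℕ)+1) * (vσ n 1) ^ (m+1) * vρ n 1 := by group
            · show h * (vσ n 1) ^ m * vρ n 1 * (vσ n ((i:ℕ)+1))⁻¹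
                  = h * (vc n ((i:ℕ)+1))⁻¹ * (vσ n 1) ^ (m-1) * vρ n 1
              calc h * (vσ n 1) ^ m * vρ n 1 * (vσ n ((i:ℕ)+1))⁻¹
                  = h * ((vσ n 1) ^ m * vρ n 1 * (vσ n ((i:ℕ)+1))⁻¹) := by group
                _ = h * ((vc n ((i:ℕ)+1))⁻¹ * ((vσ n 1) ^ (m-1) * vρ n 1)) := by
                    rw [stlinvt hn h3 hi2 m]
                _ = h * (vc n ((i:ℕ)+1))⁻¹ * (vσ n 1) ^ (m-1) * vρ n 1 := by group
    · rw [hofρ i]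
      have hi2 : (i:ℕ)+1 ≤ n-1 := i.isLt
      have hinv := vρ_inv (n := n) (i := (i:ℕ)+1) (by omega) hi2
      have pos : P (h * (vσ n 1) ^ m * (cond t (vρ n 1) 1) * vρ n ((i:ℕ)+1)) := by
        rcases Nat.lt_or_ge (i:ℕ) 1 with hc0 | hc1
        · have e0 : (i:ℕ)+1 = 1 := by omega
          rw [e0]
          cases t with
          | false =>
            refine ⟨h, hh, m, true, ?_⟩
            show h * (vσ n 1) ^ m * 1 * vρ n 1 = h * (vσ n 1) ^ m * vρ n 1
            group
          | true =>
            refine ⟨h, hh, m, false, ?_⟩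
            show h * (vσ n 1) ^ m * vρ n 1 * vρ n 1 = h * (vσ n 1) ^ m * 1
            calc h * (vσ n 1) ^ m * vρ n 1 * vρ n 1
                = h * ((vσ n 1) ^ m * (vρ n 1 * vρ n 1)) := by group
              _ = h * ((vσ n 1) ^ m * 1) := by rw [P2 hn]
              _ = h * (vσ n 1) ^ m * 1 := by group
        · rcases Nat.lt_or_ge (i:ℕ) 2 with hc1' | hc2
          · have e0 : (i:ℕ)+1 = 2 := by omega
            rw [e0]
            cases t with
            | false =>
              refine ⟨h * vf n m 0, mul_mem hh (mem_f hn m), m, true, ?_⟩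
              show h * (vσ n 1) ^ m * 1 * vρ n 2 = h * vf n m 0 * (vσ n 1) ^ m * vρ n 1
              calc h * (vσ n 1) ^ m * 1 * vρ n 2
                  = h * ((vσ n 1) ^ m * vρ n 2) := by group
                _ = h * (vf n m 0 * ((vσ n 1) ^ m * vρ n 1)) := by rw [strho2f hn m]
                _ = h * vf n m 0 * (vσ n 1) ^ m * vρ n 1 := by group
            | true =>
              refine ⟨h * (vf n m 0)⁻¹, mul_mem hh (inv_mem (mem_f hn m)), m, false, ?_⟩
              show h * (vσ n 1) ^ m * vρ n 1 * vρ n 2 = h * (vf n m 0)⁻¹ * (vσ n 1) ^ m * 1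
              calc h * (vσ n 1) ^ m * vρ n 1 * vρ n 2
                  = h * ((vσ n 1) ^ m * vρ n 1 * vρ n 2) := by group
                _ = h * ((vf n m 0)⁻¹ * (vσ n 1) ^ m) := by rw [strho2t hn m]
                _ = h * (vf n m 0)⁻¹ * (vσ n 1) ^ m * 1 := by group
          · have h3 : 3 ≤ (i:ℕ)+1 := by omega
            cases t with
            | false =>
              refine ⟨h * vg n m ((i:ℕ)+1), mul_mem hh (mem_gl hn h3 hi2 m), m, true, ?_⟩
              show h * (vσ n 1) ^ m * 1 * vρ n ((i:ℕ)+1)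
                  = h * vg n m ((i:ℕ)+1) * (vσ n 1) ^ m * vρ n 1
              calc h * (vσ n 1) ^ m * 1 * vρ n ((i:ℕ)+1)
                  = h * ((vσ n 1) ^ m * vρ n ((i:ℕ)+1)) := by group
                _ = h * (vg n m ((i:ℕ)+1) * ((vσ n 1) ^ m * vρ n 1)) := by
                    rw [strholf hn h3 hi2 m]
                _ = h * vg n m ((i:ℕ)+1) * (vσ n 1) ^ m * vρ n 1 := by group
            | true =>
              refine ⟨h * vg n m ((i:ℕ)+1), mul_mem hh (mem_gl hn h3 hi2 m), m, false, ?_⟩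
              show h * (vσ n 1) ^ m * vρ n 1 * vρ n ((i:ℕ)+1)
                  = h * vg n m ((i:ℕ)+1) * (vσ n 1) ^ m * 1
              calc h * (vσ n 1) ^ m * vρ n 1 * vρ n ((i:ℕ)+1)
                  = h * ((vσ n 1) ^ m * vρ n 1 * vρ n ((i:ℕ)+1)) := by group
                _ = h * (vg n m ((i:ℕ)+1) * (vσ n 1) ^ m) := by rw [strholt hn h3 hi2 m]
                _ = h * vg n m ((i:ℕ)+1) * (vσ n 1) ^ m * 1 := by group
      exact ⟨pos, by rw [hinv]; exact pos⟩
  let K : Subgroup (VB n) :=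
    { carrier := {y | (∀ k, P k → P (k * y)) ∧ (∀ k, P k → P (k * y⁻¹))}
      one_mem' := by
        constructor <;> intro k hk <;> simpa using hk
      mul_mem' := by
        rintro a b ⟨ha1, ha2⟩ ⟨hb1, hb2⟩
        constructor
        · intro k hk
          rw [← mul_assoc]
          exact hb1 _ (ha1 _ hk)
        · intro k hk
          rw [mul_inv_rev, ← mul_assoc]
          exact ha2 _ (hb2 _ hk)
      inv_mem' := by
        rintro a ⟨h1, h2⟩
        refine ⟨h2, fun k hk => ?_⟩
        rw [inv_inv]
        exact h1 k hk }
  have hK : ∀ y : VB n, y ∈ K := fun y =>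
    PresentedGroup.generated_by (vbRels n) K
      (fun j => ⟨fun k hk => (hstep j k hk).1, fun k hk => (hstep j k hk).2⟩) y
  have hPx : P x := by
    have h1 : P 1 := ⟨1, one_mem _, 0, false, by simp⟩
    have h2 := (hK x).1 1 h1
    simpa using h2
  obtain ⟨h, hh, m, t, rfl⟩ := hPx
  have hhA : vbφA h = 1 :=
    MonoidHom.mem_ker.mp (Abelianization.commutator_subset_ker vbφA (subset_comm hn hh))
  have hhB : vbφB h = 1 :=
    MonoidHom.mem_ker.mp (Abelianization.commutator_subset_ker vbφB (subset_comm hn hh))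
  have hxA := MonoidHom.mem_ker.mp (Abelianization.commutator_subset_ker vbφA hx)
  have hxB := MonoidHom.mem_ker.mp (Abelianization.commutator_subset_ker vbφB hx)
  rw [map_mul, map_mul, hhA, one_mul, map_zpow, vbφA_s hn] at hxA
  rw [map_mul, map_mul, hhB, one_mul, map_zpow, vbφB_s hn, one_zpow, one_mul] at hxB
  cases t with
  | false =>
    rw [show (cond false (vρ n 1) 1 : VB n) = 1 from rfl] at hxA
    rw [show vbφA (1 : VB n) = 1 from map_one vbφA, mul_one] at hxA
    have hm : m = 0 := by
      have h4 := congrArg Multiplicative.toAdd hxA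
      simpa [toAdd_zpow] using h4
    subst hm
    simpa using hh
  | true =>
    rw [show (cond true (vρ n 1) 1 : VB n) = vρ n 1 from rfl, vbφB_p hn] at hxB
    exact absurd hxB (by decide)

/-- For `n ≥ 4`, `VB_n'` is the subgroup generated by the `2n-3`
elements `c_3, …, c_{n-1}, f_0, f_1, f_2, g_{0,3}, …, g_{0,n-1}`. -/
theorem VB_commutator_generators (n : ℕ) (hn : 4 ≤ n) :
    commutator (VB n) = Subgroup.closure
      ({x | ∃ l, 3 ≤ l ∧ l ≤ n - 1 ∧ x = vc n l} ∪
       {vf n 0 0, vf n 1 0, vf n 2 0} ∪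
       {x | ∃ l, 3 ≤ l ∧ l ≤ n - 1 ∧ x = vg n 0 l}) :=
  VB_commutator_generators' n hn
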